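/- arXiv:2205.03180 — 5 statements merged into one kernel-verified Lean document; each statement's English description precedes it below -/
import Mathlib

section
/- Let M be a p-matroid containing an np-circuit C_np with |C_np| = r(M) + 1. Then the es-splitting matroid M^e_{a,b} is Hamiltonian; in particular C_np ∪ {z} is a circuit of M^e_{a,b} of size r(M^e_{a,b}) + 1 = r(M) + 2. -/
open Matrix Set

variable {α : Type*}

/-- The columns of `A` indexed by `S` are linearly independent. -/
def ColIndep {m E F : Type*} [Semiring F] (A : Matrix m E F) (S : Set E) : Prop :=
  LinearIndependent F (fun s : S => Aᵀ s.1)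

/-- `M` is the vector matroid of the matrix `A` (ground set all columns). -/
def IsVectorMatroid {m E F : Type*} [Semiring F] (M : Matroid E) (A : Matrix m E F) : Prop :=
  M.E = Set.univ ∧ ∀ S : Set E, M.Indep S ↔ ColIndep A S

/-- The splitting matrix `A_{a,b}`: `A` with an extra row having `α` in columns `a`, `b`
and `0` elsewhere. -/
def splitMatrix {m E F : Type*} [Zero F] [DecidableEq E] (A : Matrix m E F) (a b : E) (α : F) :
    Matrix (m ⊕ Unit) E F :=
  Matrix.of fun i j =>
    Sum.elim (fun i' => A i' j) (fun _ => if j = a ∨ j = b then α else 0) i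

/-- The column `z = (0,…,0,α)ᵀ`. -/
def zColumn {m F : Type*} [Zero F] (α : F) : m ⊕ Unit → F :=
  Sum.elim (fun _ => 0) (fun _ => α)

/-- The es-splitting matrix `A^e_{a,b}`: the splitting matrix with two extra columns,
`Sum.inr 0 ↦ z = (0,…,0,α)ᵀ` and `Sum.inr 1 ↦ γ = e - z`. -/
def esMatrix {m E F : Type*} [Ring F] [DecidableEq E] (A : Matrix m E F) (a b e : E) (α : F) :
    Matrix (m ⊕ Unit) (E ⊕ Fin 2) F :=
  Matrix.of fun i j =>
    Sum.elim (fun x => splitMatrix A a b α i x)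
      (fun k => if k = (0 : Fin 2) then zColumn α i
                else splitMatrix A a b α i e - zColumn α i) j

/-- A circuit of a matroid: a minimal dependent set. -/
def IsCircuit (M : Matroid α) (C : Set α) : Prop :=
  M.Dep C ∧ ∀ D, D ⊂ C → M.Indep D

/-- The (ℕ-valued) rank of a set in a matroid: the largest size of an independent subset. -/
noncomputable def rk (M : Matroid α) (X : Set α) : ℕ :=
  sSup {n | ∃ I, I ⊆ X ∧ M.Indep I ∧ I.ncard = n}

/-- Every element lies in some circuit. -/
def Coloopless (M : Matroid α) : Prop :=
  ∀ x ∈ M.E, ∃ C, IsCircuit M C ∧ x ∈ C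

/-- A simple matroid: every subset of the ground set with at most two elements is independent. -/
def SimpleMatroid (M : Matroid α) : Prop :=
  ∀ X ⊆ M.E, X.ncard ≤ 2 → M.Indep X

/-- A matroid is connected if every two distinct elements lie in a common circuit. -/
def ConnectedMatroid (M : Matroid α) : Prop :=
  ∀ x ∈ M.E, ∀ y ∈ M.E, x ≠ y → ∃ C, IsCircuit M C ∧ x ∈ C ∧ y ∈ C

/-- A `k`-separation of `M`: a partition `{S, T}` of the ground set with `|S|, |T| ≥ k` and
`r(S) + r(T) - r(M) < k`. -/
def KSeparation (M : Matroid α) (k : ℕ) (S T : Set α) : Prop :=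
  S ∪ T = M.E ∧ Disjoint S T ∧ k ≤ S.ncard ∧ k ≤ T.ncard ∧
    rk M S + rk M T < rk M M.E + k

/-- `M` is `n`-connected: it has no `k`-separation for `1 ≤ k ≤ n - 1`. -/
def NConnected (M : Matroid α) (n : ℕ) : Prop :=
  ∀ k S T, 1 ≤ k → k ≤ n - 1 → ¬ KSeparation M k S T

/-- A matroid is Eulerian if its ground set is a disjoint union of circuits. -/
def Eulerian (M : Matroid α) : Prop :=
  ∃ (n : ℕ) (D : Fin n → Set α), (∀ i, IsCircuit M (D i)) ∧
    (∀ i j, i ≠ j → Disjoint (D i) (D j)) ∧ (⋃ i, D i) = M.E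

/-- `C` carries a linear dependence of the columns of `A` with all coefficients nonzero
exactly on `C`, whose coefficients at `a` and `b` sum to zero. -/
def HasPDependence {m E F : Type*} [Semiring F] [Fintype E] (A : Matrix m E F)
    (a b : E) (C : Set E) : Prop :=
  ∃ c : E → F, (∀ x, x ∈ C ↔ c x ≠ 0) ∧ (∑ x, c x • Aᵀ x) = 0 ∧ c a + c b = 0

/-- A `p`-circuit of the vector matroid `M = M[A]` with respect to `a, b`. -/
def IsPCircuit {m E F : Type*} [Semiring F] [Fintype E] (M : Matroid E) (A : Matrix m E F)
    (a b : E) (C : Set E) : Prop :=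
  IsCircuit M C ∧ a ∈ C ∧ b ∈ C ∧ HasPDependence A a b C

/-- An `np`-circuit: a circuit meeting `{a, b}` that is not a `p`-circuit. -/
def IsNpCircuit {m E F : Type*} [Semiring F] [Fintype E] (M : Matroid E) (A : Matrix m E F)
    (a b : E) (C : Set E) : Prop :=
  IsCircuit M C ∧ (C ∩ {a, b}).Nonempty ∧ ¬ HasPDependence A a b C

variable {m E : Type*} [Fintype m] [Fintype E] [DecidableEq E] {p : ℕ} [Fact p.Prime]



open Matrix Set Submodule Module

section Helpers

variable {E F V : Type*} [Field F] [Fintype E] [AddCommGroup V] [Module F V]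

theorem li_subtype_iff (v : E → V) (S : Set E) :
    LinearIndependent F (fun s : S => v s.1) ↔
      ∀ c : E → F, (∀ x ∉ S, c x = 0) → ∑ x, c x • v x = 0 → ∀ x, c x = 0 := by
  classical
  haveI : Fintype S := S.toFinite.fintype
  have key : ∀ c : E → F, (∀ x ∉ S, c x = 0) → ∑ s : S, c s.1 • v s.1 = ∑ x, c x • v x := by
    intro c hc
    rw [← Finset.sum_subtype S.toFinset (by simp) (fun x => c x • v x)]
    refine Finset.sum_subset (Finset.subset_univ _) ?_
    intro x _ hx
    rw [hc x (by simpa using hx), zero_smul]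
  constructor
  · intro h c hc0 hsum x
    by_cases hx : x ∈ S
    · have := Fintype.linearIndependent_iff.mp h (fun s => c s.1) ?_ ⟨x, hx⟩
      · exact this
      · rw [key c hc0]; exact hsum
    · exact hc0 x hx
  · intro h
    rw [Fintype.linearIndependent_iff]
    intro g hg s
    set c : E → F := fun x => if hx : x ∈ S then g ⟨x, hx⟩ else 0 with hcdef
    have hc0 : ∀ x ∉ S, c x = 0 := fun x hx => by simp [hcdef, hx]
    have hcs : ∀ s : S, c s.1 = g s := fun s => by simp [hcdef, s.2]
    have := h c hc0 (by
      rw [← key c hc0]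
      simpa only [hcs] using hg)
    simpa [hcs] using this s

end Helpers

section Rk

variable {α : Type*}

theorem rk_eq_of {M : Matroid α} {X : Set α} {r : ℕ}
    (h1 : ∃ I, I ⊆ X ∧ M.Indep I ∧ I.ncard = r)
    (h2 : ∀ I, I ⊆ X → M.Indep I → I.ncard ≤ r) : rk M X = r := by
  have hb : ∀ n ∈ {n | ∃ I, I ⊆ X ∧ M.Indep I ∧ I.ncard = n}, n ≤ r := by
    rintro n ⟨I, hIX, hI, rfl⟩
    exact h2 I hIX hI
  refine le_antisymm (csSup_le ⟨r, h1⟩ hb) (le_csSup ⟨r, hb⟩ h1)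

end Rk

section Finrank

variable {m E F : Type*} [Field F] [Fintype E]

theorem colIndep_card_le (A : Matrix m E F) (I : Set E) (h : ColIndep A I) :
    I.ncard ≤ Module.finrank F (span F (Set.range Aᵀ)) := by
  classical
  haveI : Fintype I := I.toFinite.fintype
  haveI : FiniteDimensional F (span F (Set.range Aᵀ)) :=
    FiniteDimensional.span_of_finite F (Set.finite_range _)
  set b : I → span F (Set.range Aᵀ) :=
    fun i => ⟨Aᵀ i.1, subset_span (Set.mem_range_self _)⟩ with hb
  have hli : LinearIndependent F b := by
    apply LinearIndependent.of_comp (span F (Set.range Aᵀ)).subtype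
    exact h
  have := hli.fintype_card_le_finrank
  rwa [Set.ncard_eq_toFinset_card', Set.toFinset_card]

theorem exists_colIndep_card_eq (A : Matrix m E F) :
    ∃ I : Set E, ColIndep A I ∧ I.ncard = Module.finrank F (span F (Set.range Aᵀ)) := by
  classical
  obtain ⟨s, hsub, hspan, hli⟩ := exists_linearIndependent F (Set.range Aᵀ)
  haveI : Fintype s := ((Set.finite_range Aᵀ).subset hsub).fintype
  have hrank : Module.finrank F (span F (Set.range Aᵀ)) = s.toFinset.card := by
    rw [← hspan]; exact finrank_span_set_eq_card hli
  have hchoice : ∀ y : s, ∃ x : E, Aᵀ x = y.1 := fun y => hsub y.2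
  choose f hf using hchoice
  refine ⟨Set.range f, ?_, ?_⟩
  · have hmem : ∀ i : Set.range f, Aᵀ i.1 ∈ s := by
      rintro ⟨i, y, rfl⟩
      rw [hf]; exact y.2
    set ψ : Set.range f → s := fun i => ⟨Aᵀ i.1, hmem i⟩ with hψ
    have hinj : Function.Injective ψ := by
      rintro ⟨i, yi, rfl⟩ ⟨j, yj, rfl⟩ hij
      have : Aᵀ (f yi) = Aᵀ (f yj) := congrArg Subtype.val hij
      rw [hf, hf] at this
      have : yi = yj := Subtype.ext this
      simp [this]
    exact hli.comp ψ hinj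
  · have hfinj : Function.Injective f := by
      intro y y' hyy
      have := hf y
      rw [hyy, hf] at this
      exact Subtype.ext this.symm
    rw [← Set.image_univ, Set.ncard_image_of_injective _ hfinj, Set.ncard_univ,
      Nat.card_eq_fintype_card, hrank, Set.toFinset_card]

theorem rk_eq_finrank {M : Matroid E} {A : Matrix m E F} (hM : IsVectorMatroid M A) :
    rk M M.E = Module.finrank F (span F (Set.range Aᵀ)) := by
  refine rk_eq_of ?_ ?_
  · obtain ⟨I, hI, hcard⟩ := exists_colIndep_card_eq A
    exact ⟨I, by simp [hM.1], (hM.2 I).mpr hI, hcard⟩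
  · intro I _ hI
    exact colIndep_card_le A I ((hM.2 I).mp hI)

end Finrank

section EsHelp

open Submodule Module

variable {m E F : Type*} [Field F] [DecidableEq E]

/-- Extension of a vector by a zero last coordinate. -/
def extL (m F : Type*) [Field F] : (m → F) →ₗ[F] (m ⊕ Unit → F) where
  toFun f := Sum.elim f 0
  map_add' f g := by funext i; cases i <;> simp
  map_smul' c f := by funext i; cases i <;> simp

theorem extL_injective : Function.Injective (extL m F) := by
  intro f g h
  funext i
  exact congrFun h (Sum.inl i)

theorem esCol_inl (A : Matrix m E F) (a b e : E) (α : F) (x : E) :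
    (esMatrix A a b e α)ᵀ (Sum.inl x) =
      extL m F (Aᵀ x) + (if x = a ∨ x = b then (1 : F) else 0) • zColumn α := by
  funext i
  cases i with
  | inl i' => by_cases h : x = a ∨ x = b <;> simp [esMatrix, splitMatrix, zColumn, extL, h]
  | inr u => by_cases h : x = a ∨ x = b <;> simp [esMatrix, splitMatrix, zColumn, extL, h]

theorem esCol_z (A : Matrix m E F) (a b e : E) (α : F) :
    (esMatrix A a b e α)ᵀ (Sum.inr 0) = zColumn α := by
  funext i
  cases i <;> simp [esMatrix, zColumn]

theorem esCol_g (A : Matrix m E F) (a b e : E) (he : e = a ∨ e = b) (α : F) :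
    (esMatrix A a b e α)ᵀ (Sum.inr 1) = extL m F (Aᵀ e) := by
  funext i
  cases i with
  | inl i' => simp [esMatrix, splitMatrix, zColumn, extL]
  | inr u => simp [esMatrix, splitMatrix, zColumn, extL, if_pos he]

theorem zColumn_ne_zero {α : F} (hα : α ≠ 0) : zColumn (m := m) α ≠ 0 := by
  intro h
  exact hα (congrFun h (Sum.inr ()))

theorem zColumn_not_mem_map (p : Submodule F (m → F)) {α : F} (hα : α ≠ 0) :
    zColumn (m := m) α ∉ p.map (extL m F) := by
  rintro hmem
  obtain ⟨f, -, hf⟩ := hmem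
  exact hα ((congrFun hf (Sum.inr ())).symm.trans rfl)

theorem span_esCols (A : Matrix m E F) (a b e : E) (he : e = a ∨ e = b) (α : F) :
    span F (Set.range (esMatrix A a b e α)ᵀ) =
      (span F (Set.range Aᵀ)).map (extL m F) ⊔ span F {zColumn α} := by
  apply le_antisymm
  · rw [span_le]
    rintro _ ⟨y, rfl⟩
    cases y with
    | inl x =>
      rw [esCol_inl]
      exact add_mem
        (le_sup_left (α := Submodule F (m ⊕ Unit → F))
          (mem_map_of_mem (subset_span (Set.mem_range_self x))))
        (le_sup_right (α := Submodule F (m ⊕ Unit → F))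
          (smul_mem _ _ (subset_span rfl)))
    | inr k =>
      have hk : k = 0 ∨ k = 1 := by
        rcases k with ⟨(_ | _ | n), h⟩
        · exact Or.inl rfl
        · exact Or.inr rfl
        · omega
      rcases hk with rfl | rfl
      · rw [esCol_z]
        exact le_sup_right (α := Submodule F (m ⊕ Unit → F)) (subset_span rfl)
      · rw [esCol_g A a b e he]
        exact le_sup_left (α := Submodule F (m ⊕ Unit → F))
          (mem_map_of_mem (subset_span (Set.mem_range_self e)))
  · apply sup_le
    · rw [map_span, span_le]
      rintro _ ⟨_, ⟨x, rfl⟩, rfl⟩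
      have hx : extL m F (Aᵀ x) =
          (esMatrix A a b e α)ᵀ (Sum.inl x) -
            (if x = a ∨ x = b then (1 : F) else 0) • zColumn α := by
        rw [esCol_inl]; abel
      rw [hx, ← esCol_z A a b e α]
      exact sub_mem (subset_span (Set.mem_range_self _))
        (smul_mem _ _ (subset_span (Set.mem_range_self _)))
    · rw [span_le]
      rintro _ rfl
      rw [← esCol_z A a b e α]
      exact subset_span (Set.mem_range_self _)

theorem finrank_esCols [Fintype m] [Fintype E] (A : Matrix m E F) (a b e : E)
    (he : e = a ∨ e = b) {α : F} (hα : α ≠ 0) :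
    finrank F (span F (Set.range (esMatrix A a b e α)ᵀ)) =
      finrank F (span F (Set.range Aᵀ)) + 1 := by
  classical
  rw [span_esCols A a b e he α]
  set W := (span F (Set.range Aᵀ)).map (extL m F) with hW
  haveI : FiniteDimensional F (span F (Set.range Aᵀ)) :=
    FiniteDimensional.span_of_finite F (Set.finite_range _)
  haveI : FiniteDimensional F W := Module.Finite.map _ _
  haveI : FiniteDimensional F (span F {zColumn (m := m) α}) :=
    FiniteDimensional.span_of_finite F (Set.finite_singleton _)
  have hz : zColumn (m := m) α ∉ W := zColumn_not_mem_map _ hα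
  have hinf : W ⊓ span F {zColumn (m := m) α} = ⊥ := by
    rw [eq_bot_iff]
    rintro y ⟨hyW, hyz⟩
    obtain ⟨c, rfl⟩ := mem_span_singleton.mp hyz
    rcases eq_or_ne c 0 with rfl | hc
    · simp
    · exact absurd (by simpa [smul_smul, inv_mul_cancel₀ hc] using W.smul_mem c⁻¹ hyW) hz
  have := Submodule.finrank_sup_add_finrank_inf_eq W (span F {zColumn (m := m) α})
  rw [hinf] at this
  simp only [finrank_bot, add_zero] at this
  rw [this, finrank_span_singleton (zColumn_ne_zero hα)]
  congr 1
  exact ((span F (Set.range Aᵀ)).equivMapOfInjective _ extL_injective).finrank_eq.symm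

end EsHelp

theorem esSplitting_hamiltonian (A : Matrix m E (ZMod p)) (a b e : E)
    (he : e = a ∨ e = b) (α : ZMod p) (hα : α ≠ 0)
    (M : Matroid E) (hM : IsVectorMatroid M A)
    (M' : Matroid (E ⊕ Fin 2)) (hM' : IsVectorMatroid M' (esMatrix A a b e α))
    (Cnp : Set E) (hnp : IsNpCircuit M A a b Cnp)
    (hcard : Cnp.ncard = rk M M.E + 1) :
    IsCircuit M' (Sum.inl '' Cnp ∪ {Sum.inr 0}) ∧
      (Sum.inl '' Cnp ∪ {Sum.inr 0} : Set (E ⊕ Fin 2)).ncard = rk M' M'.E + 1 ∧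
      rk M' M'.E = rk M M.E + 1 := by
  classical
  obtain ⟨hMground, hMindep⟩ := hM
  obtain ⟨hM'ground, hM'indep⟩ := hM'
  obtain ⟨⟨hCdep, hCmin⟩, hmeet, hnpd⟩ := hnp
  set w := (esMatrix A a b e α)ᵀ with hw
  set C' : Set (E ⊕ Fin 2) := Sum.inl '' Cnp ∪ {Sum.inr 0} with hC'
  have h10 : (1 : Fin 2) ≠ 0 := by decide
  have hinlC' : ∀ x : E, Sum.inl x ∈ C' ↔ x ∈ Cnp := by
    intro x; simp [hC']
  have hz0C' : (Sum.inr 0 : E ⊕ Fin 2) ∈ C' := Or.inr rfl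
  have hz1C' : (Sum.inr 1 : E ⊕ Fin 2) ∉ C' := by simp [hC', h10]
  have hproper : ∀ T, T ⊂ Cnp → ColIndep A T := fun T hT => (hMindep T).mp (hCmin T hT)
  have hCdep' : ¬ ColIndep A Cnp := by
    intro h
    exact hCdep.not_indep ((hMindep Cnp).mpr h)
  -- extract a full-support linear dependence on Cnp
  have hexists : ∃ c : E → ZMod p, (∀ x, x ∈ Cnp ↔ c x ≠ 0) ∧ ∑ x, c x • Aᵀ x = 0 := by
    rw [ColIndep, li_subtype_iff (Aᵀ) Cnp] at hCdep'
    push_neg at hCdep'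
    obtain ⟨c, hc0, hcsum, x0, hx0⟩ := hCdep'
    have hTsub : {x | c x ≠ 0} ⊆ Cnp := fun x hx => by_contra fun h => hx (hc0 x h)
    have hTeq : {x | c x ≠ 0} = Cnp := by
      by_contra hne
      have hT : {x | c x ≠ 0} ⊂ Cnp := hTsub.ssubset_of_ne hne
      exact hx0 ((li_subtype_iff Aᵀ _).mp (hproper _ hT) c
        (fun x hx => not_not.mp hx) hcsum x0)
    exact ⟨c, fun x => by rw [← hTeq]; exact Iff.rfl, hcsum⟩
  obtain ⟨c, hcsupp, hcsum⟩ := hexists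
  -- key: any full-support dependence has nonzero "indicator sum"
  have hkey : ∀ g : E → ZMod p, (∀ x, x ∈ Cnp ↔ g x ≠ 0) → ∑ x, g x • Aᵀ x = 0 →
      ∑ x, g x * (if x = a ∨ x = b then 1 else 0) ≠ 0 := by
    intro g h1 h2 h3
    apply hnpd
    refine ⟨g, h1, h2, ?_⟩
    have hsum2 : ∑ x, g x * (if x = a ∨ x = b then (1 : ZMod p) else 0)
        = ∑ x ∈ ({a, b} : Finset E), g x := by
      calc ∑ x, g x * (if x = a ∨ x = b then (1 : ZMod p) else 0)
          = ∑ x, (if x = a ∨ x = b then g x else 0) := by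
            refine Finset.sum_congr rfl fun x _ => ?_
            split <;> simp
        _ = ∑ x ∈ Finset.univ.filter (fun x => x = a ∨ x = b), g x :=
            (Finset.sum_filter _ _).symm
        _ = ∑ x ∈ ({a, b} : Finset E), g x := by
            congr 1
            ext x
            simp
    rw [hsum2] at h3
    by_cases hab : a = b
    · subst hab
      have hpair : ({a, a} : Finset E) = {a} := by simp
      rw [hpair, Finset.sum_singleton] at h3
      rw [h3]; ring
    · rwa [Finset.sum_pair hab] at h3
  -- the coefficient vector for the spanning circuit of M'
  set s : ZMod p := ∑ x, c x * (if x = a ∨ x = b then 1 else 0) with hs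
  have hsne : s ≠ 0 := hkey c hcsupp hcsum
  set c' : E ⊕ Fin 2 → ZMod p := Sum.elim c (fun k => if k = 0 then -s else 0) with hc'def
  -- the standard reduction of a dependence over the es-matrix
  have hform : ∀ d : E ⊕ Fin 2 → ZMod p, d (Sum.inr 1) = 0 →
      ∑ y, d y • w y =
        extL m (ZMod p) (∑ x, d (Sum.inl x) • Aᵀ x) +
          ((∑ x, d (Sum.inl x) * (if x = a ∨ x = b then 1 else 0)) + d (Sum.inr 0)) •
            zColumn α := by
    intro d hd1
    rw [Fintype.sum_sum_type, Fin.sum_univ_two, hd1, zero_smul, add_zero]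
    simp only [hw, esCol_inl, esCol_z]
    rw [map_sum]
    simp only [smul_add, smul_smul]
    rw [Finset.sum_add_distrib, add_smul, ← Finset.sum_smul]
    have : ∀ x, d (Sum.inl x) • extL m (ZMod p) (Aᵀ x)
        = extL m (ZMod p) (d (Sum.inl x) • Aᵀ x) := fun x => (_root_.map_smul _ _ _).symm
    simp only [this]
    abel
  have hformc : ∑ y, c' y • w y = 0 := by
    have hc1 : c' (Sum.inr 1) = 0 := by simp [hc'def, h10]
    rw [hform c' hc1]
    have e1 : ∀ x : E, c' (Sum.inl x) = c x := fun x => rfl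
    have e2 : c' (Sum.inr 0) = -s := by simp [hc'def]
    simp only [e1, e2]
    rw [hcsum, ← hs, add_neg_cancel, zero_smul, map_zero, add_zero]
  -- C' is dependent in M'
  have hnotindep : ¬ M'.Indep C' := by
    intro h
    have hli := (hM'indep C').mp h
    have hvan : ∀ y ∉ C', c' y = 0 := by
      rintro (x | k) hy
      · exact not_not.mp fun hne => hy ((hinlC' x).mpr ((hcsupp x).mpr hne))
      · have hk : k ≠ 0 := fun h0 => hy (h0 ▸ hz0C')
        simp [hc'def, hk]
    have := (li_subtype_iff w C').mp hli c' hvan hformc (Sum.inr 0)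
    have h0 : (-s : ZMod p) = 0 := by simpa [hc'def] using this
    exact hsne (neg_eq_zero.mp h0)
  -- every proper subset of C' is independent in M'
  have hminor : ∀ D, D ⊂ C' → M'.Indep D := by
    intro D hD
    refine (hM'indep D).mpr ?_
    rw [ColIndep, li_subtype_iff (esMatrix A a b e α)ᵀ D]
    intro d hvan hdsum
    have hd1 : d (Sum.inr 1) = 0 := hvan _ (fun h => hz1C' (hD.subset h))
    set g : E → ZMod p := fun x => d (Sum.inl x) with hg
    rw [hform d hd1] at hdsum
    have htop : ∑ x, g x • Aᵀ x = 0 := by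
      funext i'
      have h := congrFun hdsum (Sum.inl i')
      simpa [extL, zColumn, Finset.sum_apply] using h
    have hbot : (∑ x, g x * (if x = a ∨ x = b then 1 else 0)) + d (Sum.inr 0) = 0 := by
      have h := congrFun hdsum (Sum.inr ())
      simp only [extL, zColumn, Pi.add_apply, Pi.smul_apply, Pi.zero_apply, smul_eq_mul,
        LinearMap.coe_mk, AddHom.coe_mk, Sum.elim_inr, zero_add] at h
      rcases mul_eq_zero.mp h with h' | h'
      · exact h'
      · exact absurd h' hα
    by_cases hgz : ∀ x, g x = 0
    · have hsz : (∑ x, g x * (if x = a ∨ x = b then (1 : ZMod p) else 0)) = 0 :=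
        Finset.sum_eq_zero fun x _ => by rw [hgz x, zero_mul]
      have hdz : d (Sum.inr 0) = 0 := by rwa [hsz, zero_add] at hbot
      rintro (x | k)
      · exact hgz x
      · rcases k with ⟨(_ | _ | n), hn⟩
        · exact hdz
        · exact hd1
        · omega
    · exfalso
      push_neg at hgz
      obtain ⟨x0, hx0⟩ := hgz
      have hTsub : {x | g x ≠ 0} ⊆ Cnp := by
        intro x hx
        by_contra hxC
        exact hx (hvan (Sum.inl x) fun hmem => hxC ((hinlC' x).mp (hD.subset hmem)))
      have hTeq : {x | g x ≠ 0} = Cnp := by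
        by_contra hne
        have hT : {x | g x ≠ 0} ⊂ Cnp := hTsub.ssubset_of_ne hne
        exact hx0 ((li_subtype_iff Aᵀ _).mp (hproper _ hT) g
          (fun x hx => not_not.mp hx) htop x0)
      have hgsupp : ∀ x, x ∈ Cnp ↔ g x ≠ 0 := fun x => by rw [← hTeq]; exact Iff.rfl
      have hsgne := hkey g hgsupp htop
      have hdne : d (Sum.inr 0) ≠ 0 := by
        intro h0
        rw [h0, add_zero] at hbot
        exact hsgne hbot
      have hmem0 : Sum.inr 0 ∈ D := by_contra fun hmem => hdne (hvan _ hmem)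
      have hsubD : C' ⊆ D := by
        rintro y (⟨x, hx, rfl⟩ | rfl)
        · exact by_contra fun hmem => (hgsupp x).mp hx (hvan _ hmem)
        · exact hmem0
      exact hD.ne (hD.subset.antisymm hsubD)
  have hcirc : IsCircuit M' C' :=
    ⟨Matroid.dep_iff.mpr ⟨hnotindep, by rw [hM'ground]; exact Set.subset_univ _⟩, hminor⟩
  have hr' : rk M' M'.E = rk M M.E + 1 := by
    rw [rk_eq_finrank ⟨hM'ground, hM'indep⟩, rk_eq_finrank ⟨hMground, hMindep⟩,
      finrank_esCols A a b e he hα]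
  have hcard' : C'.ncard = Cnp.ncard + 1 := by
    rw [hC', Set.ncard_union_eq (Set.disjoint_singleton_right.mpr (by simp))
      (Set.toFinite _) (Set.toFinite _),
      Set.ncard_image_of_injective _ Sum.inl_injective, Set.ncard_singleton]
  refine ⟨hcirc, ?_, hr'⟩
  rw [hcard', hcard, hr']
end

section
/- Let M be a p-matroid, B a basis of M with e ∈ B (e ∈ {a,b}). Then B ∪ {γ} is a basis of the es-splitting matroid M^e_{a,b}. -/
open Matrix Set

variable {α : Type*}

lemma colIndep_iff_aux {m E F : Type*} [Field F] [Fintype E] (A : Matrix m E F) (S : Set E) :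
    ColIndep A S ↔ ∀ c : E → F, (∀ x, x ∉ S → c x = 0) →
      (∑ x, c x • Aᵀ x) = 0 → ∀ x, c x = 0 := by
  classical
  haveI : Fintype ↥S := S.toFinite.fintype
  rw [ColIndep, Fintype.linearIndependent_iff]
  have key : ∀ c : E → F, (∀ x, x ∉ S → c x = 0) →
      (∑ s : S, c s.1 • Aᵀ s.1) = ∑ x, c x • Aᵀ x := by
    intro c hc
    rw [← Finset.sum_subtype S.toFinset (fun x => Set.mem_toFinset) (fun x => c x • Aᵀ x)]
    refine Finset.sum_subset (Finset.subset_univ _) fun x _ hx => ?_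
    rw [hc x (by simpa using hx), zero_smul]
  constructor
  · intro h c hc hsum x
    by_cases hx : x ∈ S
    · exact h (fun s => c s.1) (by rw [key c hc]; exact hsum) ⟨x, hx⟩
    · exact hc x hx
  · intro h g hg s
    set c : E → F := fun x => if hx : x ∈ S then g ⟨x, hx⟩ else 0 with hcdef
    have hc : ∀ x, x ∉ S → c x = 0 := fun x hx => by simp [hcdef, hx]
    have hgc : ∀ s : S, g s = c s.1 := fun s => by simp [hcdef, s.2]
    have := h c hc (by rw [← key c hc]; simpa only [← hgc] using hg) s.1
    rwa [← hgc] at this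

variable {m E : Type*} [Fintype m] [Fintype E] [DecidableEq E] {p : ℕ} [Fact p.Prime]

theorem esSplitting_base_gamma (A : Matrix m E (ZMod p)) (a b e : E)
    (he : e = a ∨ e = b) (α : ZMod p) (hα : α ≠ 0)
    (M : Matroid E) (hM : IsVectorMatroid M A)
    (M' : Matroid (E ⊕ Fin 2)) (hM' : IsVectorMatroid M' (esMatrix A a b e α))
    (B : Set E) (hB : M.IsBase B) (heB : e ∈ B) :
    M'.IsBase (Sum.inl '' B ∪ {Sum.inr 1}) := by
  classical
  obtain ⟨hE, hI⟩ := hM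
  obtain ⟨hE', hI'⟩ := hM'
  set S : Set (E ⊕ Fin 2) := Sum.inl '' B ∪ {Sum.inr 1} with hS
  have hmem_inl : ∀ x : E, Sum.inl x ∈ S ↔ x ∈ B := by
    intro x; simp [hS]
  have hmem0 : (Sum.inr 0 : E ⊕ Fin 2) ∉ S := by simp [hS]
  have hmem1 : (Sum.inr 1 : E ⊕ Fin 2) ∈ S := by simp [hS]
  have hBind := (colIndep_iff_aux A B).mp ((hI B).mp hB.indep)
  -- evaluation of a dependence at the top rows and the bottom row
  have htop : ∀ (c : E ⊕ Fin 2 → ZMod p),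
      (∑ j, c j • (esMatrix A a b e α)ᵀ j) = 0 → ∀ i : m,
      (∑ x, c (Sum.inl x) * A i x) + c (Sum.inr 1) * A i e = 0 := by
    intro c hc i
    have h := congrFun hc (Sum.inl i)
    simpa [Finset.sum_apply, Fintype.sum_sum_type, Fin.sum_univ_two,
      esMatrix, splitMatrix, zColumn] using h
  have hbot : ∀ (c : E ⊕ Fin 2 → ZMod p),
      (∑ j, c j • (esMatrix A a b e α)ᵀ j) = 0 →
      (∑ x, c (Sum.inl x) * (if x = a ∨ x = b then α else 0)) + c (Sum.inr 0) * α
        + c (Sum.inr 1) * ((if e = a ∨ e = b then α else 0) - α) = 0 := by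
    intro c hc
    have h := congrFun hc (Sum.inr ())
    simp only [Finset.sum_apply, Pi.smul_apply, smul_eq_mul, Pi.zero_apply,
      Fintype.sum_sum_type, Fin.sum_univ_two, esMatrix, splitMatrix, zColumn,
      Matrix.transpose_apply, Matrix.of_apply, Sum.elim_inl, Sum.elim_inr, reduceIte, Fin.reduceEq] at h
    simp only [mul_ite, mul_zero] at h ⊢
    linear_combination h
  -- independence of S
  have hSind : M'.Indep S := by
    rw [hI' S, colIndep_iff_aux]
    intro c hc hsum
    have hc0 : c (Sum.inr 0) = 0 := hc _ hmem0
    set c' : E → ZMod p := fun x => c (Sum.inl x) + if x = e then c (Sum.inr 1) else 0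
      with hc'
    have hc'B : ∀ x, x ∉ B → c' x = 0 := by
      intro x hx
      have hxe : x ≠ e := fun h => hx (h ▸ heB)
      have : c (Sum.inl x) = 0 := hc _ (fun h => hx ((hmem_inl x).mp h))
      simp [hc', hxe, this]
    have hc'sum : (∑ x, c' x • Aᵀ x) = 0 := by
      funext i
      have h := htop c hsum i
      simp only [Finset.sum_apply, Pi.smul_apply, smul_eq_mul, Pi.zero_apply,
        Matrix.transpose_apply, hc', add_mul, Finset.sum_add_distrib, ite_mul, zero_mul,
        Finset.sum_ite_eq', Finset.mem_univ, if_pos]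
      linear_combination h
    have hz := hBind c' hc'B hc'sum
    have hcinl : ∀ x : E, c (Sum.inl x) = if x = e then -c (Sum.inr 1) else 0 := by
      intro x
      have hx : c (Sum.inl x) + (if x = e then c (Sum.inr 1) else 0) = 0 := hz x
      by_cases hxe : x = e
      · simp only [hxe, eq_self_iff_true, if_true, ite_true] at hx ⊢
        linear_combination hx
      · simpa [hxe] using hx
    have hb := hbot c hsum
    rw [hc0] at hb
    have hse : (if e = a ∨ e = b then α else 0) = α := if_pos he
    rw [hse] at hb
    have hsum1 : (∑ x, c (Sum.inl x) * (if x = a ∨ x = b then α else 0))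
        = -c (Sum.inr 1) * α := by
      rw [Finset.sum_eq_single e]
      · rw [hcinl e, if_pos rfl, hse]
      · intro v _ hv
        rw [hcinl v, if_neg hv, zero_mul]
      · intro h; exact absurd (Finset.mem_univ e) h
    rw [hsum1] at hb
    have h1 : c (Sum.inr 1) * α = 0 := by linear_combination -hb
    have hc1 : c (Sum.inr 1) = 0 := by
      rcases mul_eq_zero.mp h1 with h | h
      · exact h
      · exact absurd h hα
    rintro (x | k)
    · rw [hcinl x, hc1]; simp
    · fin_cases k
      · exact hc0
      · exact hc1
  -- maximality
  refine hSind.isBase_of_forall_insert ?_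
  rintro y ⟨-, hyS⟩ hins
  have hP := (colIndep_iff_aux (esMatrix A a b e α) (insert y S)).mp ((hI' _).mp hins)
  obtain (x | k) := y
  · -- y = inl x with x ∉ B
    have hx : x ∉ B := fun h => hyS ((hmem_inl x).mpr h)
    have hdep : M.Dep (insert x B) := hB.insert_dep ⟨by rw [hE]; trivial, hx⟩
    have hnind := hdep.not_indep
    rw [hI, colIndep_iff_aux] at hnind
    push_neg at hnind
    obtain ⟨c, hcsupp, hcsum, u, hu⟩ := hnind
    set T : ZMod p := ∑ v, c v * (if v = a ∨ v = b then α else 0) with hT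
    set t : ZMod p := -(α⁻¹ * T) with ht
    set d : E ⊕ Fin 2 → ZMod p :=
      Sum.elim (fun v => c v + if v = e then t else 0)
        (fun k => if k = 0 then 0 else -t) with hd
    have hdsupp : ∀ j, j ∉ insert (Sum.inl x) S → d j = 0 := by
      rintro (v | k) hj
      · by_cases hv : v = e
        · exact absurd (Set.mem_insert_of_mem _ ((hmem_inl v).mpr (hv ▸ heB))) hj
        · have hvB : v ∉ B := fun h =>
            hj (Set.mem_insert_of_mem _ ((hmem_inl v).mpr h))
          have hvx : v ≠ x := by rintro rfl; exact hj (Set.mem_insert _ _)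
          have : c v = 0 := hcsupp v (by simp [hvx, hvB])
          simp [hd, hv, this]
      · fin_cases k
        · simp [hd]
        · exact absurd (Set.mem_insert_of_mem _ hmem1) hj
    have hdsum : (∑ j, d j • (esMatrix A a b e α)ᵀ j) = 0 := by
      funext i
      obtain (i | i) := i
      · have h := congrFun hcsum i
        simp only [Finset.sum_apply, Pi.smul_apply, smul_eq_mul, Pi.zero_apply,
          Matrix.transpose_apply] at h
        simp only [Finset.sum_apply, Pi.smul_apply, smul_eq_mul, Pi.zero_apply,
          Fintype.sum_sum_type, Fin.sum_univ_two, esMatrix, splitMatrix, zColumn,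
          Matrix.transpose_apply, Matrix.of_apply, Sum.elim_inl, Sum.elim_inr, reduceIte, Fin.reduceEq, hd]
        simp only [add_mul, Finset.sum_add_distrib, ite_mul, zero_mul,
          Finset.sum_ite_eq', Finset.mem_univ, if_pos]
        linear_combination h
      · simp only [Finset.sum_apply, Pi.smul_apply, smul_eq_mul, Pi.zero_apply,
          Fintype.sum_sum_type, Fin.sum_univ_two, esMatrix, splitMatrix, zColumn,
          Matrix.transpose_apply, Matrix.of_apply, Sum.elim_inl, Sum.elim_inr, reduceIte, Fin.reduceEq, hd]
        simp only [add_mul, Finset.sum_add_distrib, ite_mul, zero_mul,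
          Finset.sum_ite_eq', Finset.mem_univ, if_pos, ← hT]
        have hta : t * α = -T := by
          rw [ht, neg_mul, mul_comm α⁻¹ T, mul_assoc, inv_mul_cancel₀ hα, mul_one]
        linear_combination hta
    have ht0 : t = 0 := by
      have := hP d hdsupp hdsum (Sum.inr 1)
      simpa [hd] using this
    have := hP d hdsupp hdsum (Sum.inl u)
    rw [hd] at this
    simp only [Sum.elim_inl, ht0, ite_self, add_zero] at this
    exact hu this
  · -- y = inr k
    fin_cases k
    · -- y = inr 0 : the column z lies in the span of S
      set d : E ⊕ Fin 2 → ZMod p :=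
        Sum.elim (fun v => if v = e then 1 else 0) (fun _ => -1) with hd
      have hdsupp : ∀ j, j ∉ insert (Sum.inr 0) S → d j = 0 := by
        rintro (v | k) hj
        · by_cases hv : v = e
          · exact absurd (Set.mem_insert_of_mem _ ((hmem_inl v).mpr (hv ▸ heB))) hj
          · simp [hd, hv]
        · fin_cases k
          · exact absurd (Set.mem_insert _ _) hj
          · exact absurd (Set.mem_insert_of_mem _ hmem1) hj
      have hdsum : (∑ j, d j • (esMatrix A a b e α)ᵀ j) = 0 := by
        funext i
        obtain (i | i) := i <;>
        · simp only [Finset.sum_apply, Pi.smul_apply, smul_eq_mul, Pi.zero_apply,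
            Fintype.sum_sum_type, Fin.sum_univ_two, esMatrix, splitMatrix, zColumn,
            Matrix.transpose_apply, Matrix.of_apply, Sum.elim_inl, Sum.elim_inr, reduceIte, Fin.reduceEq, hd]
          simp only [ite_mul, one_mul, zero_mul, Finset.sum_ite_eq', Finset.mem_univ,
            if_pos]
          ring
      have := hP d hdsupp hdsum (Sum.inr 0)
      rw [hd] at this
      simp only [Sum.elim_inr, neg_eq_zero] at this
      exact one_ne_zero this
    · exact hyS hmem1
end

section
/- Let M be a p-matroid and I an independent set of M with |I| = r(M) − 1 and e ∉ cl(I), where e ∈ {a,b}. Then I ∪ {z, γ} is a basis of the es-splitting matroid M^e_{a,b}. -/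
open Matrix Set

variable {α : Type*}

variable {m E : Type*} [Fintype m] [Fintype E] [DecidableEq E] {p : ℕ} [Fact p.Prime]


attribute [local instance] Classical.propDecidable

section Helpers
variable {E F V : Type*} [Fintype E] [Field F] [AddCommGroup V] [Module F V]

lemma sum_subtype_eq' (v : E → V) (S : Set E) (c : E → F) (hc : ∀ x ∉ S, c x = 0) :
    ∑ x, c x • v x = ∑ s : S, c s • v s := by
  calc ∑ x, c x • v x = ∑ x ∈ S.toFinset, c x • v x :=
        (Finset.sum_subset (Finset.subset_univ _)
          (fun x _ hx => by rw [hc x (by simpa using hx), zero_smul])).symm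
    _ = ∑ s : S, c s • v s := Finset.sum_subtype _ (by simp) _

lemma coeffs_zero_of_indep {v : E → V} {S : Set E}
    (hS : LinearIndependent F (fun s : S => v s)) (c : E → F)
    (hc : ∀ x ∉ S, c x = 0) (h0 : ∑ x, c x • v x = 0) : ∀ x, c x = 0 := by
  have h := Fintype.linearIndependent_iff.mp hS (fun s => c s)
    (by rw [← sum_subtype_eq' v S c hc]; exact h0)
  intro x
  by_cases hx : x ∈ S
  · exact h ⟨x, hx⟩
  · exact hc x hx

lemma indep_of_coeffs {v : E → V} {S : Set E}
    (h : ∀ c : E → F, (∀ x ∉ S, c x = 0) → ∑ x, c x • v x = 0 → ∀ x, c x = 0) :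
    LinearIndependent F (fun s : S => v s) := by
  rw [Fintype.linearIndependent_iff]
  intro g hg s
  set c : E → F := fun x => if hx : x ∈ S then g ⟨x, hx⟩ else 0 with hcdef
  have hsupp : ∀ x ∉ S, c x = 0 := fun x hx => dif_neg hx
  have hsum : ∑ x, c x • v x = 0 := by
    rw [sum_subtype_eq' v S c hsupp]
    have : ∀ t : S, c t • v t = g t • v t := fun t => by simp [hcdef, t.2]
    rw [Finset.sum_congr rfl (fun t _ => this t)]
    exact hg
  have := h c hsupp hsum s
  simpa [hcdef, s.2] using this

end Helpers

theorem esSplitting_base_z_gamma (A : Matrix m E (ZMod p)) (a b e : E)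
    (he : e = a ∨ e = b) (α : ZMod p) (hα : α ≠ 0)
    (M : Matroid E) (hM : IsVectorMatroid M A)
    (M' : Matroid (E ⊕ Fin 2)) (hM' : IsVectorMatroid M' (esMatrix A a b e α))
    (I : Set E) (hI : M.Indep I) (hcard : I.ncard + 1 = rk M M.E)
    (hecl : e ∉ M.closure I) :
    M'.IsBase (Sum.inl '' I ∪ {Sum.inr 0, Sum.inr 1}) := by
  classical
  obtain ⟨hME, hMI⟩ := hM
  obtain ⟨hM'E, hM'I⟩ := hM'
  set S : Set (E ⊕ Fin 2) := Sum.inl '' I ∪ {Sum.inr 0, Sum.inr 1} with hSdef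
  set J : Set E := insert e I with hJdef
  have heI : e ∉ I := fun h => hecl (M.subset_closure I (by rw [hME]; exact subset_univ I) h)
  have hJ : M.Indep J := hI.insert_indep_iff.mpr (Or.inl ⟨by rw [hME]; trivial, hecl⟩)
  have hJcard : J.ncard = rk M M.E := by
    rw [hJdef, Set.ncard_insert_of_notMem heI I.toFinite, hcard]
  have hrk_le : ∀ K : Set E, M.Indep K → K.ncard ≤ rk M M.E := by
    intro K hK
    apply le_csSup
    · refine ⟨Fintype.card E, fun n hn => ?_⟩
      obtain ⟨I0, _, _, h⟩ := hn
      rw [← h]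
      exact le_trans (Set.ncard_le_ncard (subset_univ _) finite_univ)
        (le_of_eq (by simp [Set.ncard_univ, Nat.card_eq_fintype_card]))
    · exact ⟨K, by rw [hME]; exact subset_univ K, hK, rfl⟩
  have hmax : ∀ x, x ∉ J → ¬ M.Indep (insert x J) := by
    intro x hx hind
    have h1 := hrk_le _ hind
    rw [Set.ncard_insert_of_notMem hx J.toFinite, hJcard] at h1
    omega
  have hColJ : ColIndep A J := (hMI J).mp hJ
  -- span fact
  have hspan : ∀ x : E, ∃ c : E → ZMod p, (∀ y ∉ J, c y = 0) ∧ ∑ y, c y • Aᵀ y = Aᵀ x := by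
    intro x
    by_cases hx : x ∈ J
    · refine ⟨fun y => if y = x then 1 else 0, fun y hy => if_neg (fun h => hy (by rw [h]; exact hx)), ?_⟩
      simp [ite_smul, Finset.sum_ite_eq']
      exact (Finset.sum_eq_single x (fun y _ hy => if_neg hy) (fun h => absurd (Finset.mem_univ x) h)).trans (if_pos rfl)
    · have hdep : ¬ ColIndep A (insert x J) := fun h => hmax x hx ((hMI _).mpr h)
      have hne : ¬ (∀ c : E → ZMod p, (∀ y ∉ insert x J, c y = 0) →
          ∑ y, c y • Aᵀ y = 0 → ∀ y, c y = 0) := fun h => hdep (indep_of_coeffs h)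
      push_neg at hne
      obtain ⟨c, hcsupp, hcsum, y0, hy0⟩ := hne
      have hcx : c x ≠ 0 := by
        intro hcx0
        have hsupp' : ∀ y ∉ J, c y = 0 := by
          intro y hy
          by_cases hyx : y = x
          · subst hyx; exact hcx0
          · exact hcsupp y (by simp [hy, hyx])
        exact hy0 (coeffs_zero_of_indep hColJ c hsupp' hcsum y0)
      refine ⟨fun y => -(c x)⁻¹ * c y + (if y = x then 1 else 0), ?_, ?_⟩
      · intro y hy
        show -(c x)⁻¹ * c y + (if y = x then 1 else 0) = 0
        by_cases hyx : y = x
        · subst hyx; rw [if_pos rfl]; field_simp; ring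
        · rw [hcsupp y (by simp [hy, hyx]), if_neg hyx]; ring
      · calc ∑ y, (-(c x)⁻¹ * c y + (if y = x then 1 else 0)) • Aᵀ y
            = ∑ y, (-((c x)⁻¹ • (c y • Aᵀ y)) + (if y = x then Aᵀ y else 0)) := by
              refine Finset.sum_congr rfl (fun y _ => ?_)
              rw [add_smul, ite_smul, one_smul, zero_smul, neg_mul, neg_smul, smul_smul]
          _ = Aᵀ x := by
              rw [Finset.sum_add_distrib, Finset.sum_neg_distrib, ← Finset.smul_sum, hcsum,
                smul_zero, neg_zero, zero_add]
              exact (Finset.sum_eq_single x (fun y _ hy => if_neg hy) (fun h => absurd (Finset.mem_univ x) h)).trans (if_pos rfl)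
  -- Part 1 : independence of S
  have hSci : ColIndep (esMatrix A a b e α) S := by
    unfold ColIndep
    apply indep_of_coeffs
    intro c hcsupp hcsum
    set cE : E → ZMod p := fun x => c (Sum.inl x) + (if x = e then c (Sum.inr 1) else 0)
      with hcEdef
    have hcEsupp : ∀ x ∉ J, cE x = 0 := by
      intro x hx
      have hxI : x ∉ I := fun h => hx (Or.inr h)
      have hxe : x ≠ e := fun h => hx (Or.inl h)
      have : c (Sum.inl x) = 0 := hcsupp _ (by simp [hSdef, hxI])
      simp [hcEdef, this, hxe]
    have htop : ∑ x, cE x • Aᵀ x = 0 := by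
      funext i
      have h1 := congrFun hcsum (Sum.inl i)
      simp only [Finset.sum_apply, Pi.smul_apply, Pi.zero_apply, smul_eq_mul,
        Fintype.sum_sum_type, Fin.sum_univ_two, esMatrix, splitMatrix, zColumn,
        Matrix.transpose_apply, Matrix.of_apply, Sum.elim_inl, Sum.elim_inr] at h1 ⊢
      simp only [hcEdef, add_mul, ite_mul, zero_mul, Finset.sum_add_distrib,
        Finset.sum_ite_eq', Finset.mem_univ, if_pos]
      simp only [show ((1 : Fin 2) = 0) ↔ False from by decide, show ((0 : Fin 2) = 0) ↔ True from by decide, if_true, if_false] at h1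
      linear_combination h1
    have hcE0 : ∀ x, cE x = 0 := coeffs_zero_of_indep hColJ cE hcEsupp htop
    have hc1 : c (Sum.inr 1) = 0 := by
      have h1 := hcE0 e
      have h2 : c (Sum.inl e) = 0 := hcsupp _ (by simp [hSdef, heI])
      simpa [hcEdef, h2] using h1
    have hcl : ∀ x, c (Sum.inl x) = 0 := by
      intro x
      by_cases hx : x ∈ I
      · have h1 := hcE0 x
        have hxe : x ≠ e := fun h => heI (h ▸ hx)
        simpa [hcEdef, hxe] using h1
      · exact hcsupp _ (by simp [hSdef, hx])
    have hc0 : c (Sum.inr 0) = 0 := by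
      have h2 := congrFun hcsum (Sum.inr ())
      simp only [Finset.sum_apply, Pi.smul_apply, Pi.zero_apply, smul_eq_mul,
        Fintype.sum_sum_type, Fin.sum_univ_two, esMatrix, splitMatrix, zColumn,
        Matrix.transpose_apply, Matrix.of_apply, Sum.elim_inl, Sum.elim_inr,
        hcl, hc1, zero_mul, Finset.sum_const_zero, zero_add, add_zero] at h2
      simp only [show ((1 : Fin 2) = 0) ↔ False from by decide, show ((0 : Fin 2) = 0) ↔ True from by decide, if_true, if_false] at h2
      rcases mul_eq_zero.mp h2 with h | h
      · exact h
      · exact absurd h hα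
    rintro (x | k)
    · exact hcl x
    · fin_cases k
      · exact hc0
      · exact hc1
  have hSind : M'.Indep S := (hM'I S).mpr hSci
  -- Part 2 : maximality
  apply hSind.isBase_of_forall_insert
  rintro (x | k) hj
  swap
  · exfalso
    apply hj.2
    fin_cases k
    · exact Or.inr (Or.inl rfl)
    · exact Or.inr (Or.inr rfl)
  have hxI : x ∉ I := fun h => hj.2 (Or.inl ⟨x, h, rfl⟩)
  intro hind
  have hci := (hM'I _).mp hind
  obtain ⟨cE, hcEsupp, hcEsum⟩ := hspan x
  have hcEx : x ≠ e → cE x = 0 := fun hxe => hcEsupp x (by simp [hJdef, hxI, hxe])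
  set s : ZMod p := (∑ y, cE y * (if y = a ∨ y = b then α else 0)) -
      (if x = a ∨ x = b then α else 0) with hs
  set c : (E ⊕ Fin 2) → ZMod p := Sum.elim
      (fun y => (if y = e then 0 else cE y) - (if y = x then 1 else 0))
      (fun k => if k = 0 then cE e - α⁻¹ * s else cE e) with hcdef
  have hsupp : ∀ j ∉ insert (Sum.inl x) S, c j = 0 := by
    rintro (y | k) hjmem
    · have hyx : y ≠ x := fun h => hjmem (by rw [h]; exact Or.inl rfl)
      have hyI : y ∉ I := fun h => hjmem (Or.inr (Or.inl ⟨y, h, rfl⟩))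
      by_cases hye : y = e
      · subst hye; simp [hcdef, hyx]
      · have : cE y = 0 := hcEsupp y (by simp [hJdef, hyI, hye])
        simp [hcdef, hye, hyx, this]
    · exfalso
      apply hjmem
      fin_cases k
      · exact Or.inr (Or.inr (Or.inl rfl))
      · exact Or.inr (Or.inr (Or.inr rfl))
  have hwe : (if e = a ∨ e = b then α else 0) = α := if_pos he
  have hsum : ∑ j, c j • (esMatrix A a b e α)ᵀ j = 0 := by
    funext i
    cases i with
    | inl i' =>
      have hT := congrFun hcEsum i'
      simp only [Finset.sum_apply, Pi.smul_apply, smul_eq_mul] at hT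
      simp only [Finset.sum_apply, Pi.smul_apply, Pi.zero_apply, smul_eq_mul,
        Fintype.sum_sum_type, Fin.sum_univ_two, esMatrix, splitMatrix, zColumn,
        Matrix.transpose_apply, Matrix.of_apply, Sum.elim_inl, Sum.elim_inr, hcdef,
        sub_mul, ite_mul, zero_mul, one_mul, Finset.sum_sub_distrib,
        Finset.sum_ite_eq', Finset.mem_univ, if_pos]
      simp only [show ((1 : Fin 2) = 0) ↔ False from by decide, show ((0 : Fin 2) = 0) ↔ True from by decide, if_true, if_false]
      have hrw : ∀ y : E, (if y = e then 0 else cE y * A i' y)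
          = cE y * A i' y - (if y = e then cE y * A i' y else 0) := by
        intro y; by_cases hye : y = e <;> simp [hye]
      rw [Finset.sum_congr rfl (fun y _ => hrw y), Finset.sum_sub_distrib, Finset.sum_ite_eq']
      simp only [Finset.mem_univ, if_true, Matrix.transpose_apply] at hT ⊢
      linear_combination hT
    | inr u =>
      have hinv : α⁻¹ * α = 1 := inv_mul_cancel₀ hα
      simp only [Finset.sum_apply, Pi.smul_apply, Pi.zero_apply, smul_eq_mul,
        Fintype.sum_sum_type, Fin.sum_univ_two, esMatrix, splitMatrix, zColumn,
        Matrix.transpose_apply, Matrix.of_apply, Sum.elim_inl, Sum.elim_inr, hcdef,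
        sub_mul, ite_mul, zero_mul, one_mul, Finset.sum_sub_distrib,
        Finset.sum_ite_eq', Finset.mem_univ, if_pos, hwe]
      simp only [show ((1 : Fin 2) = 0) ↔ False from by decide, show ((0 : Fin 2) = 0) ↔ True from by decide, if_true, if_false]
      have hrw : ∀ y : E, (if y = e then 0 else cE y * (if y = a ∨ y = b then α else 0))
          = cE y * (if y = a ∨ y = b then α else 0)
            - (if y = e then cE y * (if y = a ∨ y = b then α else 0) else 0) := by
        intro y; by_cases hye : y = e <;> simp [hye]
      rw [Finset.sum_congr rfl (fun y _ => hrw y), Finset.sum_sub_distrib, Finset.sum_ite_eq']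
      simp only [Finset.mem_univ, if_true, hwe]
      rw [hs]
      ring_nf
      linear_combination (-(s : ZMod p)) * hinv
  have h0 := coeffs_zero_of_indep hci c hsupp hsum (Sum.inl x)
  have hcx : c (Sum.inl x) = -1 := by
    by_cases hxe : x = e
    · simp [hcdef, hxe]
    · simp [hcdef, hxe, hcEx hxe]
  rw [h0] at hcx
  exact (by norm_num : ((0 : ZMod p)) ≠ -1) hcx
end

section
/- Let M be a p-matroid and C a circuit of M disjoint from {a,b}. Then C is also a circuit of the es-splitting matroid M^e_{a,b}. -/
open Matrix Set

variable {α : Type*}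

variable {m E : Type*} [Fintype m] [Fintype E] [DecidableEq E] {p : ℕ} [Fact p.Prime]

/-- Extend a vector on `m` by zero on the extra coordinate. -/
def extLinear (m F : Type*) [Semiring F] : (m → F) →ₗ[F] (m ⊕ Unit → F) where
  toFun g := Sum.elim g 0
  map_add' g h := by funext i; cases i <;> simp
  map_smul' c g := by funext i; cases i <;> simp

lemma extLinear_injective (m F : Type*) [Semiring F] :
    Function.Injective (extLinear m F) := by
  intro g h hgh
  funext i
  have := congrFun hgh (Sum.inl i)
  simpa [extLinear] using this

lemma colIndep_esMatrix_inl_iff {F : Type*} [CommRing F] (A : Matrix m E F)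
    (a b e : E) (α : F) (S : Set E) (hS : Disjoint S {a, b}) :
    ColIndep (esMatrix A a b e α) (Sum.inl '' S) ↔ ColIndep A S := by
  have hcol : ∀ x ∈ S, (esMatrix A a b e α)ᵀ (Sum.inl x) = extLinear m F (Aᵀ x) := by
    intro x hx
    have hxa : x ≠ a := fun h => (hS.ne_of_mem hx (by simp) : x ≠ a) h
    have hxb : x ≠ b := fun h => (hS.ne_of_mem hx (by simp) : x ≠ b) h
    funext i
    cases i with
    | inl i' => simp [esMatrix, splitMatrix, extLinear, Matrix.transpose]
    | inr u => simp [esMatrix, splitMatrix, extLinear, Matrix.transpose, hxa, hxb]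
  unfold ColIndep
  rw [← linearIndependent_equiv (Equiv.Set.image (Sum.inl : E → E ⊕ Fin 2) S
    Sum.inl_injective)]
  have heq : (fun s : Sum.inl '' S => (esMatrix A a b e α)ᵀ s.1) ∘
      (Equiv.Set.image (Sum.inl : E → E ⊕ Fin 2) S Sum.inl_injective)
      = (extLinear m F) ∘ (fun s : S => Aᵀ s.1) := by
    funext s
    simp only [Function.comp_apply, Equiv.Set.image_apply]
    exact hcol s.1 s.2
  rw [heq]
  exact (extLinear m F).linearIndependent_iff
    (LinearMap.ker_eq_bot.mpr (extLinear_injective m F))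

theorem esSplitting_circuit_of_disjoint (A : Matrix m E (ZMod p)) (a b e : E)
    (he : e = a ∨ e = b) (α : ZMod p) (hα : α ≠ 0)
    (M : Matroid E) (hM : IsVectorMatroid M A)
    (M' : Matroid (E ⊕ Fin 2)) (hM' : IsVectorMatroid M' (esMatrix A a b e α))
    (C : Set E) (hC : IsCircuit M C) (hd : Disjoint C {a, b}) :
    IsCircuit M' (Sum.inl '' C) := by
  obtain ⟨hCdep, hCmin⟩ := hC
  constructor
  · rw [Matroid.dep_iff]
    refine ⟨?_, by rw [hM'.1]; exact Set.subset_univ _⟩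
    intro hind
    have : ColIndep A C := by
      rw [← colIndep_esMatrix_inl_iff A a b e α C hd, ← hM'.2]
      exact hind
    exact hCdep.not_indep ((hM.2 C).mpr this)
  · intro D hD
    have hDsub : D ⊆ Sum.inl '' C := hD.subset
    have hDsub' : Sum.inl ⁻¹' D ⊆ C := by
      intro x hx
      obtain ⟨y, hy, hxy⟩ := hDsub hx
      rwa [← Sum.inl_injective hxy]
    have hDimg : D = Sum.inl '' (Sum.inl ⁻¹' D) := by
      apply subset_antisymm
      · intro d hd'
        obtain ⟨y, hy, rfl⟩ := hDsub hd'
        exact ⟨y, hd', rfl⟩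
      · exact Set.image_preimage_subset _ _
    have hDssub : Sum.inl ⁻¹' D ⊂ C := by
      refine ⟨hDsub', fun h => hD.not_subset ?_⟩
      calc Sum.inl '' C ⊆ Sum.inl '' (Sum.inl ⁻¹' D) := Set.image_mono h
        _ = D := hDimg.symm
    have hind : M.Indep (Sum.inl ⁻¹' D) := hCmin _ hDssub
    have hci : ColIndep A (Sum.inl ⁻¹' D) := (hM.2 _).mp hind
    rw [hM'.2, hDimg]
    exact (colIndep_esMatrix_inl_iff A a b e α _
      (hd.mono_left hDsub')).mpr hci
end

section
/- Let M be a p-matroid and C an np-circuit of M containing e but not a, where e = b. Then (C \ {e}) ∪ {γ} is a circuit of the es-splitting matroid M^e_{a,b}. -/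
open Matrix Set

variable {α : Type*}

/-- Zero-padding of a vector, as a linear map. -/
def padMap (m F : Type*) [Semiring F] : (m → F) →ₗ[F] (m ⊕ Unit → F) where
  toFun v := Sum.elim v 0
  map_add' u v := by ext (i | i) <;> simp
  map_smul' c v := by ext (i | i) <;> simp

lemma padMap_injective (m F : Type*) [Semiring F] :
    Function.Injective (padMap m F) := by
  intro u v h
  funext i
  have := congrFun h (Sum.inl i)
  simpa [padMap] using this

variable {m E : Type*} [Fintype m] [Fintype E] [DecidableEq E] {p : ℕ} [Fact p.Prime]

lemma esMatrix_col_eq (A : Matrix m E (ZMod p)) (a b : E) (α : ZMod p) (x : E)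
    (hxa : x ≠ a) :
    (esMatrix A a b b α)ᵀ (if x = b then Sum.inr 1 else Sum.inl x)
      = padMap m (ZMod p) (Aᵀ x) := by
  by_cases hxb : x = b
  · subst hxb
    funext i
    cases i with
    | inl i' => simp [esMatrix, splitMatrix, zColumn, padMap, Matrix.transpose]
    | inr u => simp [esMatrix, splitMatrix, zColumn, padMap, Matrix.transpose]
  · funext i
    cases i with
    | inl i' => simp [esMatrix, splitMatrix, zColumn, padMap, hxb, Matrix.transpose]
    | inr u => simp [esMatrix, splitMatrix, zColumn, padMap, hxb, hxa, Matrix.transpose]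


theorem esSplitting_circuit_of_npCircuit (A : Matrix m E (ZMod p)) (a b : E)
    (α : ZMod p) (hα : α ≠ 0)
    (M : Matroid E) (hM : IsVectorMatroid M A)
    (M' : Matroid (E ⊕ Fin 2)) (hM' : IsVectorMatroid M' (esMatrix A a b b α))
    (C : Set E) (hC : IsNpCircuit M A a b C) (hbC : b ∈ C) (haC : a ∉ C) :
    IsCircuit M' (Sum.inl '' (C \ {b}) ∪ {Sum.inr 1}) := by
  classical
  set B := esMatrix A a b b α with hB
  set f : E → E ⊕ Fin 2 := fun x => if x = b then Sum.inr 1 else Sum.inl x with hf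
  have hfinj : Function.Injective f := by
    intro x y h
    by_cases hx : x = b <;> by_cases hy : y = b <;>
      simp only [hf, hx, hy, if_pos, if_neg, if_true, if_false] at h <;>
      simp_all
  have himg : Sum.inl '' (C \ {b}) ∪ {Sum.inr 1} = f '' C := by
    ext t
    constructor
    · rintro (⟨x, ⟨hxC, hxb⟩, rfl⟩ | rfl)
      · exact ⟨x, hxC, by simp only [hf]; rw [if_neg (by simpa using hxb)]⟩
      · exact ⟨b, hbC, by simp [hf]⟩
    · rintro ⟨x, hxC, rfl⟩
      by_cases hxb : x = b
      · subst hxb; right; simp [hf]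
      · left; exact ⟨x, ⟨hxC, hxb⟩, by simp [hf, hxb]⟩
  have key : ∀ S : Set E, S ⊆ C → (ColIndep B (f '' S) ↔ ColIndep A S) := by
    intro S hSC
    have hcol : ∀ s : S, Bᵀ (f s.1) = padMap m (ZMod p) (Aᵀ s.1) := fun s =>
      esMatrix_col_eq A a b α s.1 (fun h => haC (h ▸ hSC s.2))
    unfold ColIndep
    rw [← linearIndependent_equiv (Equiv.Set.imageOfInjOn f S hfinj.injOn)]
    have hcomp : (fun t : ↥(f '' S) => Bᵀ t.1) ∘ (Equiv.Set.imageOfInjOn f S hfinj.injOn)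
        = (padMap m (ZMod p)) ∘ (fun s : S => Aᵀ s.1) := by
      funext s
      exact hcol s
    rw [hcomp]
    exact (padMap m (ZMod p)).linearIndependent_iff
      (LinearMap.ker_eq_bot.mpr (padMap_injective m (ZMod p)))
  rw [himg]
  constructor
  · rw [Matroid.dep_iff]
    refine ⟨fun hind => ?_, by simp [hM'.1]⟩
    have hCi : ColIndep A C := (key C subset_rfl).mp ((hM'.2 _).mp hind)
    exact hC.1.1.not_indep ((hM.2 C).mpr hCi)
  · intro D hD
    set S : Set E := {x ∈ C | f x ∈ D} with hS
    have hDS : D = f '' S := by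
      apply Subset.antisymm
      · intro d hd
        obtain ⟨x, hxC, rfl⟩ := hD.subset hd
        exact ⟨x, ⟨hxC, hd⟩, rfl⟩
      · rintro _ ⟨x, hx, rfl⟩
        exact hx.2
    have hSC : S ⊂ C := by
      refine ⟨fun x hx => hx.1, fun hCS => hD.ne ?_⟩
      rw [hDS]
      exact congrArg (f '' ·) (Subset.antisymm (fun x hx => hx.1) hCS)
    have hSi : ColIndep A S := (hM.2 S).mp (hC.1.2 S hSC)
    refine (hM'.2 D).mpr ?_
    rw [hDS]
    exact (key S hSC.subset).mpr hSi
end
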